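/- Let $G$ be a connected weighted graph with distinct edge weights, and let $F^*$ be its unique minimum spanning tree. Suppose in one phase, each vertex $v$ computes via Prim's algorithm a set $E(v)$ of MST edges (edges of $F^*$) and the graph $G_C$ is updated by contracting vertex sets that are connected via edges in $\bigcup_v E(v)$. Then: (1) every edge in $\bigcup_v E(v)$ belongs to $F^*$; and (2) every edge of $F^*$ not in $\bigcup_v E(v)$ survives in the contracted graph $G_C$, i.e., its two endpoints lie in different contracted super-vertices. -/

import Mathlib

open SimpleGraph

lemma conn_transfer {V : Type*} {G₁ G₂ : SimpleGraph V} (h : G₁.Connected)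
    (he : ∀ x y : V, G₁.Adj x y → G₂.Reachable x y) : G₂.Connected := by
  rw [connected_iff] at h ⊢
  refine ⟨fun x y => ?_, h.2⟩
  obtain ⟨w⟩ := h.1 x y
  induction w with
  | nil => exact Reachable.refl _
  | cons a p ih => exact (he _ _ a).trans ih

lemma conn_card_le {V : Type*} [Fintype V] [DecidableEq V] :
    ∀ (n : ℕ) (H : SimpleGraph V) (_inst : Fintype H.edgeSet), H.Connected →
      H.edgeFinset.card = n → Fintype.card V - 1 ≤ n := by
  intro n
  induction n using Nat.strong_induction_on with
  | _ n ih =>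
    intro H inst hconn hcard
    by_cases hac : H.IsAcyclic
    · have ht : H.IsTree := ⟨hconn, hac⟩
      have := ht.card_edgeFinset
      omega
    · rw [isAcyclic_iff_forall_edge_isBridge] at hac
      push_neg at hac
      obtain ⟨e, he, hbr⟩ := hac
      induction e using Sym2.ind with
      | _ u v =>
        rw [isBridge_iff] at hbr
        push_neg at hbr
        rw [mem_edgeSet] at he
        have hreach := hbr
        set H' : SimpleGraph V := H \ fromEdgeSet {s(u, v)} with hH'
        have hconn' : H'.Connected := by
          refine conn_transfer hconn fun x y hxy => ?_
          by_cases hxyuv : s(x, y) = s(u, v)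
          · rw [Sym2.eq_iff] at hxyuv
            rcases hxyuv with ⟨rfl, rfl⟩ | ⟨rfl, rfl⟩
            · exact hreach
            · exact hreach.symm
          · refine Adj.reachable ?_
            rw [sdiff_adj]
            refine ⟨hxy, fun hc => ?_⟩
            rw [fromEdgeSet_adj] at hc
            exact hxyuv (Set.mem_singleton_iff.mp hc.1)
        haveI inst' : Fintype H'.edgeSet := Set.Finite.fintype (Set.toFinite _)
        have heq : H'.edgeFinset = H.edgeFinset.erase s(u, v) := by
          ext g
          simp only [mem_edgeFinset, Finset.mem_erase, hH', edgeSet_sdiff,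
            edgeSet_fromEdgeSet, Set.mem_diff, Set.mem_singleton_iff]
          constructor
          · rintro ⟨hg1, hg2⟩
            refine ⟨fun hgc => hg2 ⟨hgc, ?_⟩, hg1⟩
            subst hgc
            simpa using he.ne
          · rintro ⟨hg1, hg2⟩
            exact ⟨hg2, fun hc => hg1 hc.1⟩
        have hmem : s(u, v) ∈ H.edgeFinset := by rwa [mem_edgeFinset, mem_edgeSet]
        have hlt : H'.edgeFinset.card < n := by
          rw [heq, Finset.card_erase_of_mem hmem, hcard]
          have : 0 < n := hcard ▸ Finset.card_pos.mpr ⟨_, hmem⟩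
          omega
        have := ih _ hlt H' inst' hconn' rfl
        omega



/-- The set of vertices spanned by a local Prim tree grown from `v` along the
list of edges `es`. -/
def primVerts {V : Type*} (v : V) (es : List (Sym2 V)) : Set V :=
  insert v {x | ∃ e ∈ es, x ∈ e}

/-- Correctness of the local-Prim phase of the AMPC MSF algorithm. `G` is a
connected weighted graph with distinct edge weights and unique minimum
spanning tree `Fstar`. Each vertex `v` runs Prim's algorithm locally,
committing a list of edges each of which is, at the time of its addition, a
minimum-weight edge of `G` leaving the current local tree. Then (1) every
committed edge lies in `Fstar`, and (2) every edge of `Fstar` not committed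
survives the contraction along committed edges: its endpoints are not
connected by committed edges. -/
theorem msf_local_prim_correct {V : Type*} [Fintype V] [DecidableEq V]
    (G : SimpleGraph V) (hconn : G.Connected)
    (wt : Sym2 V → ℝ)
    (hdistinct : ∀ e ∈ G.edgeSet, ∀ e' ∈ G.edgeSet, wt e = wt e' → e = e')
    (Fstar : Finset (Sym2 V))
    (hFsub : ↑Fstar ⊆ G.edgeSet)
    (hFconn : (SimpleGraph.fromEdgeSet (↑Fstar : Set (Sym2 V))).Connected)
    (hFcard : Fstar.card = Fintype.card V - 1)
    (hFmin : ∀ F' : Finset (Sym2 V), ↑F' ⊆ G.edgeSet →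
      (SimpleGraph.fromEdgeSet (↑F' : Set (Sym2 V))).Connected →
      F'.card = Fintype.card V - 1 →
      ∑ e ∈ Fstar, wt e ≤ ∑ e ∈ F', wt e)
    (Ev : V → Finset (Sym2 V))
    (hPrim : ∀ v : V, ∃ l : List (Sym2 V), l.toFinset = Ev v ∧ l.Nodup ∧
      ∀ (j : ℕ) (hj : j < l.length),
        l.get ⟨j, hj⟩ ∈ G.edgeSet ∧
        (∃ a b : V, l.get ⟨j, hj⟩ = s(a, b) ∧
          a ∈ primVerts v (l.take j) ∧ b ∉ primVerts v (l.take j)) ∧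
        ∀ e' ∈ G.edgeSet,
          (∃ a b : V, e' = s(a, b) ∧
            a ∈ primVerts v (l.take j) ∧ b ∉ primVerts v (l.take j)) →
          wt (l.get ⟨j, hj⟩) ≤ wt e') :
    (∀ v : V, Ev v ⊆ Fstar) ∧
    (∀ e ∈ Fstar, e ∉ (⋃ v : V, (↑(Ev v) : Set (Sym2 V))) →
      ∀ a b : V, e = s(a, b) →
        ¬ (SimpleGraph.fromEdgeSet (⋃ v : V, (↑(Ev v) : Set (Sym2 V)))).Reachable a b) := by
  set T : SimpleGraph V := fromEdgeSet (↑Fstar : Set (Sym2 V)) with hT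
  have hnd : ∀ e ∈ Fstar, ¬ e.IsDiag := fun e heF => G.not_isDiag_of_mem_edgeSet (hFsub heF)
  have hTadj : ∀ x y : V, T.Adj x y ↔ s(x, y) ∈ Fstar ∧ x ≠ y := by
    intro x y; rw [hT, fromEdgeSet_adj]; exact Iff.rfl
  -- the cut property
  have hcut : ∀ (S : Set V) (a b : V), s(a, b) ∈ G.edgeSet → a ∈ S → b ∉ S →
      (∀ e' ∈ G.edgeSet, (∃ c d : V, e' = s(c, d) ∧ c ∈ S ∧ d ∉ S) → wt s(a, b) ≤ wt e') →
      s(a, b) ∈ Fstar := by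
    intro S a b hab haS hbS hmin
    by_contra habF
    -- find a crossing edge on a path from a to b in T, with detours avoiding it
    have lemA : ∀ (x y : V) (w : T.Walk x y), w.edges.Nodup → x ∈ S → y ∉ S →
        ∃ c d : V, s(c, d) ∈ Fstar ∧ c ∈ S ∧ d ∉ S ∧
          (fromEdgeSet ((↑Fstar : Set (Sym2 V)) \ {s(c, d)})).Reachable x c ∧
          (fromEdgeSet ((↑Fstar : Set (Sym2 V)) \ {s(c, d)})).Reachable d y ∧
          s(c, d) ∈ w.edges := by
      intro x y w
      induction w with
      | nil => intro _ hx hy; exact absurd hx hy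
      | @cons x z y h p ih =>
        intro hndw hx hy
        rw [Walk.edges_cons, List.nodup_cons] at hndw
        have hxz : s(x, z) ∈ Fstar ∧ x ≠ z := (hTadj x z).mp h
        by_cases hz : z ∈ S
        · obtain ⟨c, d, hcdF, hcS, hdS, h1, h2, hmem⟩ := ih hndw.2 hz hy
          refine ⟨c, d, hcdF, hcS, hdS, ?_, h2, List.mem_cons_of_mem _ hmem⟩
          have hne : s(x, z) ≠ s(c, d) := fun hc => hndw.1 (hc ▸ hmem)
          have hadj : (fromEdgeSet ((↑Fstar : Set (Sym2 V)) \ {s(c, d)})).Adj x z := by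
            rw [fromEdgeSet_adj]
            exact ⟨⟨hxz.1, hne⟩, hxz.2⟩
          exact hadj.reachable.trans h1
        · refine ⟨x, z, hxz.1, hx, hz, Reachable.refl _, ?_, List.mem_cons_self⟩
          have hsub : ∀ g ∈ p.edges,
              g ∈ (fromEdgeSet ((↑Fstar : Set (Sym2 V)) \ {s(x, z)})).edgeSet := by
            intro g hg
            have hgT : g ∈ T.edgeSet := p.edges_subset_edgeSet hg
            rw [hT, edgeSet_fromEdgeSet] at hgT
            rw [edgeSet_fromEdgeSet]
            exact ⟨⟨hgT.1, fun hc => hndw.1 (hc ▸ hg)⟩, hgT.2⟩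
          exact (p.transfer _ hsub).reachable
    obtain ⟨w0⟩ := hFconn.preconnected a b
    obtain ⟨c, d, hcdF, hcS, hdS, h1, h2, _⟩ :=
      lemA a b w0.toPath w0.toPath.prop.edges_nodup haS hbS
    have habne : s(a, b) ≠ s(c, d) := fun hc => habF (hc ▸ hcdF)
    set F' : Finset (Sym2 V) := insert s(a, b) (Fstar.erase s(c, d)) with hF'
    have habnm : s(a, b) ∉ Fstar.erase s(c, d) := fun hm => habF (Finset.mem_of_mem_erase hm)
    have hcoe : (↑F' : Set (Sym2 V)) = insert s(a, b) ((↑Fstar : Set (Sym2 V)) \ {s(c, d)}) := by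
      rw [hF', Finset.coe_insert, Finset.coe_erase]
    have habne' : a ≠ b := by
      intro hc
      exact G.not_isDiag_of_mem_edgeSet hab (by rw [Sym2.mk_isDiag_iff]; exact hc)
    have hmono : fromEdgeSet ((↑Fstar : Set (Sym2 V)) \ {s(c, d)}) ≤
        fromEdgeSet (↑F' : Set (Sym2 V)) := by
      apply fromEdgeSet_mono
      rw [hcoe]
      exact Set.subset_insert _ _
    have hadjab : (fromEdgeSet (↑F' : Set (Sym2 V))).Adj a b := by
      rw [fromEdgeSet_adj]
      exact ⟨by rw [hcoe]; exact Set.mem_insert _ _, habne'⟩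
    have hreachcd : (fromEdgeSet (↑F' : Set (Sym2 V))).Reachable c d :=
      ((h1.symm.mono hmono).trans hadjab.reachable).trans (h2.symm.mono hmono)
    have hconn' : (fromEdgeSet (↑F' : Set (Sym2 V))).Connected := by
      refine conn_transfer hFconn fun x y hxy => ?_
      have hxy' := (hTadj x y).mp hxy
      by_cases hcase : s(x, y) = s(c, d)
      · rw [Sym2.eq_iff] at hcase
        rcases hcase with ⟨rfl, rfl⟩ | ⟨rfl, rfl⟩
        · exact hreachcd
        · exact hreachcd.symm
      · refine Adj.reachable ?_
        rw [fromEdgeSet_adj, hcoe]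
        exact ⟨Set.mem_insert_of_mem _ ⟨hxy'.1, hcase⟩, hxy'.2⟩
    have hsub' : (↑F' : Set (Sym2 V)) ⊆ G.edgeSet := by
      rw [hcoe]
      rintro g (rfl | ⟨hg, -⟩)
      · exact hab
      · exact hFsub hg
    have hcard' : F'.card = Fintype.card V - 1 := by
      rw [hF', Finset.card_insert_of_notMem habnm, Finset.card_erase_of_mem hcdF]
      have h0 : 0 < Fstar.card := Finset.card_pos.mpr ⟨_, hcdF⟩
      omega
    have hle := hFmin F' hsub' hconn' hcard'
    have hsum : ∑ e ∈ F', wt e = wt s(a, b) + ∑ e ∈ Fstar.erase s(c, d), wt e := by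
      rw [hF', Finset.sum_insert habnm]
    have hsum2 : ∑ e ∈ Fstar.erase s(c, d), wt e + wt s(c, d) = ∑ e ∈ Fstar, wt e :=
      Finset.sum_erase_add _ _ hcdF
    have hge : wt s(a, b) ≤ wt s(c, d) :=
      hmin _ (hFsub hcdF) ⟨c, d, rfl, hcS, hdS⟩
    have heqwt : wt s(a, b) = wt s(c, d) := by linarith [hle, hsum, hsum2]
    exact habne (hdistinct _ hab _ (hFsub hcdF) heqwt)
  -- Part 1
  have part1 : ∀ v : V, Ev v ⊆ Fstar := by
    intro v e he
    obtain ⟨l, hl, _hnodup, hspec⟩ := hPrim v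
    rw [← hl, List.mem_toFinset] at he
    obtain ⟨⟨j, hj⟩, rfl⟩ := List.mem_iff_get.mp he
    obtain ⟨hG, ⟨a, b, heq, haS, hbS⟩, hminj⟩ := hspec j hj
    rw [heq] at hG ⊢
    refine hcut _ a b hG haS hbS fun e' h1 h2 => ?_
    have := hminj e' h1 h2
    rwa [heq] at this
  refine ⟨part1, ?_⟩
  -- Part 2
  intro e heF heU a b heab hreach
  subst heab
  set U : Set (Sym2 V) := ⋃ v : V, (↑(Ev v) : Set (Sym2 V)) with hU
  have hUsub : U ⊆ (↑Fstar : Set (Sym2 V)) \ {s(a, b)} := by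
    intro g hg
    obtain ⟨v, hv⟩ := Set.mem_iUnion.mp hg
    exact ⟨part1 v hv, fun hc => heU (hc ▸ hg)⟩
  set F' : Finset (Sym2 V) := Fstar.erase s(a, b) with hF'
  have hcoe : (↑F' : Set (Sym2 V)) = (↑Fstar : Set (Sym2 V)) \ {s(a, b)} := by
    rw [hF', Finset.coe_erase]
  have hreach' : (fromEdgeSet (↑F' : Set (Sym2 V))).Reachable a b := by
    refine hreach.mono (fromEdgeSet_mono ?_)
    rw [hcoe]; exact hUsub
  have hconn' : (fromEdgeSet (↑F' : Set (Sym2 V))).Connected := by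
    refine conn_transfer hFconn fun x y hxy => ?_
    have hxy' := (hTadj x y).mp hxy
    by_cases hcase : s(x, y) = s(a, b)
    · rw [Sym2.eq_iff] at hcase
      rcases hcase with ⟨rfl, rfl⟩ | ⟨rfl, rfl⟩
      · exact hreach'
      · exact hreach'.symm
    · refine Adj.reachable ?_
      rw [fromEdgeSet_adj, hcoe]
      exact ⟨⟨hxy'.1, hcase⟩, hxy'.2⟩
  haveI inst' : Fintype (fromEdgeSet (↑F' : Set (Sym2 V))).edgeSet :=
    Set.Finite.fintype (Set.toFinite _)
  have hEF : (fromEdgeSet (↑F' : Set (Sym2 V))).edgeFinset = F' := by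
    ext g
    rw [mem_edgeFinset, edgeSet_fromEdgeSet]
    constructor
    · rintro ⟨hg, -⟩; exact hg
    · intro hg
      exact ⟨hg, hnd g (Finset.mem_of_mem_erase hg)⟩
  have hcount := conn_card_le _ (fromEdgeSet (↑F' : Set (Sym2 V))) inst' hconn' rfl
  rw [hEF] at hcount
  have hcardF' : F'.card = Fstar.card - 1 := Finset.card_erase_of_mem heF
  have habne' : a ≠ b := by
    intro hc
    exact G.not_isDiag_of_mem_edgeSet (hFsub heF) (by rw [Sym2.mk_isDiag_iff]; exact hc)
  have h2V : 2 ≤ Fintype.card V := Fintype.one_lt_card_iff_nontrivial.mpr ⟨a, b, habne'⟩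
  have h0 : 0 < Fstar.card := Finset.card_pos.mpr ⟨_, heF⟩
  omega
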